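/- If (k₁,k₂) is generic, then for any two distinct partitions μ ≠ ν of n, the points λ(μ,k) and λ(ν,k) of ℝⁿ lie in distinct W(Bₙ)-orbits; equivalently, the multiset {|h(b)k₁ + k₂| : b a box of the Young diagram of μ} differs from the multiset {|h(b)k₁ + k₂| : b a box of the Young diagram of ν}. -/

import Mathlib

/- STATEMENT 15: For the root system of type `Bₙ` in `ℝⁿ` with parameters `k₁` (long roots
`±e_i ± e_j`) and `k₂` (short roots `±e_i`), if `(k₁, k₂)` is generic, i.e.
`k₁k₂·∏_{j=1}^{2(n-1)} (jk₁ + 2k₂)(jk₁ - 2k₂) ≠ 0`, then for any two distinct partitions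
`μ ≠ ν` of `n` the points `λ(μ, k)` and `λ(ν, k)` of `ℝⁿ` lie in distinct `W(Bₙ)`-orbits,
where `W(Bₙ)` acts by permutations and sign changes of the coordinates and `λ(μ, k)` is a
vector whose coordinates are the numbers `h(b)·k₁ + k₂` over the boxes `b` of the Young
diagram of `μ` (the box in column `i`, row `j` having height `h(b) = j - i`). -/

/-- Genericity of the parameters `(k₁, k₂)` for `Bₙ`. -/
def BnGeneric (n : ℕ) (k₁ k₂ : ℝ) : Prop :=
  k₁ * k₂ * ∏ j ∈ Finset.Icc 1 (2 * (n - 1)),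
    (((j : ℝ) * k₁ + 2 * k₂) * ((j : ℝ) * k₁ - 2 * k₂)) ≠ 0

/-- `l` is the list of column lengths `μ₁ ≥ μ₂ ≥ … ≥ μ_d > 0` of a partition of `n`. -/
def IsPartitionOf (n : ℕ) (l : List ℕ) : Prop :=
  l.Pairwise (· ≥ ·) ∧ (∀ p ∈ l, 0 < p) ∧ l.sum = n

/-- The multiset of the numbers `h(b)·k₁ + k₂ = (j - i)·k₁ + k₂` over the boxes `b` of the
Young diagram whose `i`-th column has `l_i` boxes (indices starting from `0`). -/
def heightCoords (k₁ k₂ : ℝ) (l : List ℕ) : Multiset ℝ :=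
  ↑(l.zipIdx.flatMap fun p => (List.range p.1).map fun j => ((j : ℝ) - (p.2 : ℝ)) * k₁ + k₂)

/-- `x` is a vector `λ(μ, k) ∈ ℝⁿ` attached to the partition `μ = l`: its coordinates form
(in some order) the multiset of the numbers `h(b)·k₁ + k₂` over the boxes of the Young
diagram of `μ`. -/
def IsLambdaVec (n : ℕ) (k₁ k₂ : ℝ) (l : List ℕ) (x : Fin n → ℝ) : Prop :=
  (↑(List.ofFn x) : Multiset ℝ) = heightCoords k₁ k₂ l

/-- The multiset of heights of a Young diagram, as integers. -/
def heightsZ (l : List ℕ) : Multiset ℤ :=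
  ↑(l.zipIdx.flatMap fun p => (List.range p.1).map fun j : ℕ => ((j : ℤ) - (p.2 : ℤ)))

lemma normListR (l : List ℕ) (f : ℝ → ℝ) :
    List.map f (l.flatMap fun a => [((a : ℕ) : ℝ)]) = l.map (fun j : ℕ => f (j : ℝ)) := by
  induction l with
  | nil => rfl
  | cons a l ih => simp_all

lemma heightCoords_eq_map (k₁ k₂ : ℝ) (l : List ℕ) :
    heightCoords k₁ k₂ l = (heightsZ l).map (fun h : ℤ => (h : ℝ) * k₁ + k₂) := by
  rw [heightCoords, heightsZ, Multiset.map_coe, List.map_flatMap]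
  refine congrArg _ (congrArg (fun f => List.flatMap f _) (funext fun p => ?_))
  rw [List.map_map]
  simp only [List.pure_def, List.bind_eq_flatMap]
  rw [normListR]
  refine List.map_congr_left fun j _ => ?_
  simp only [Function.comp_apply]
  push_cast
  ring
lemma heightsZ_cons (a : ℕ) (l : List ℕ) :
    heightsZ (a :: l) =
      (↑((List.range a).map fun j : ℕ => (j : ℤ)) : Multiset ℤ)
        + (heightsZ l).map (fun h => h - 1) := by
  rw [heightsZ, heightsZ, Multiset.map_coe, Multiset.coe_add]
  refine congrArg _ ?_
  rw [List.zipIdx_cons', List.flatMap_cons,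
    List.flatMap_map, List.map_flatMap]
  refine congrArg₂ (· ++ ·) ?_ (congrArg (fun f => List.flatMap f _) (funext fun p => ?_))
  · refine List.map_congr_left fun j _ => ?_
    simp
  · rw [List.map_map]
    refine List.map_congr_left fun j _ => ?_
    simp only [Function.comp_apply, Prod.map_snd, Prod.map_fst, id]
    push_cast
    ring
lemma mem_heightsZ_iff {l : List ℕ} {h : ℤ} :
    h ∈ heightsZ l ↔ ∃ p, p ∈ l.zipIdx ∧ ∃ j, j < p.1 ∧ (j : ℤ) - (p.2 : ℤ) = h := by
  simp only [heightsZ, Multiset.mem_coe, List.mem_flatMap, List.mem_map, List.mem_range]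
lemma length_le_sum_of_pos : ∀ l : List ℕ, (∀ p ∈ l, 0 < p) → l.length ≤ l.sum
  | [], _ => le_refl 0
  | a :: l, h => by
    simp only [List.length_cons, List.sum_cons]
    have h1 := length_le_sum_of_pos l (fun p hp => h p (List.mem_cons_of_mem _ hp))
    have h2 := h a (List.mem_cons_self)
    omega

lemma heightsZ_bound {n : ℕ} {l : List ℕ} (hl : IsPartitionOf n l) {h : ℤ}
    (hh : h ∈ heightsZ l) : |h| ≤ (n : ℤ) - 1 := by
  obtain ⟨hsort, hpos, hsum⟩ := hl
  obtain ⟨⟨m, i⟩, hp, j, hj, rfl⟩ := mem_heightsZ_iff.mp hh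
  rw [List.mk_mem_zipIdx_iff_getElem?] at hp
  have hi : i < l.length := (List.getElem?_eq_some_iff.mp hp).1
  have hm : l[i] = m := (List.getElem?_eq_some_iff.mp hp).2
  have hmem : m ∈ l := hm ▸ List.getElem_mem hi
  have hmn : m ≤ n := hsum ▸ List.le_sum_of_mem hmem
  have hlen : l.length ≤ n := hsum ▸ length_le_sum_of_pos l hpos
  rw [abs_le]
  omega

lemma heightsZ_le_of_sorted {a : ℕ} {l : List ℕ} (hs : (a :: l).Pairwise (· ≥ ·)) {h : ℤ}
    (hh : h ∈ heightsZ (a :: l)) : h ≤ (a : ℤ) - 1 := by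
  obtain ⟨⟨m, i⟩, hp, j, hj, rfl⟩ := mem_heightsZ_iff.mp hh
  rw [List.mk_mem_zipIdx_iff_getElem?] at hp
  have hi : i < (a :: l).length := (List.getElem?_eq_some_iff.mp hp).1
  have hm : (a :: l)[i] = m := (List.getElem?_eq_some_iff.mp hp).2
  have hmem : m ∈ a :: l := hm ▸ List.getElem_mem hi
  have hma : m ≤ a := by
    rcases List.mem_cons.mp hmem with rfl | hmem'
    · exact le_refl _
    · exact List.rel_of_pairwise_cons hs hmem'
  omega

lemma sub_one_mem_heightsZ {a : ℕ} (ha : 0 < a) (l : List ℕ) :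
    (a : ℤ) - 1 ∈ heightsZ (a :: l) := by
  rw [mem_heightsZ_iff]
  refine ⟨(a, 0), ?_, a - 1, by omega, by push_cast [Nat.cast_sub ha]; ring⟩
  rw [List.mk_mem_zipIdx_iff_getElem?]
  simp

lemma heightsZ_injective : ∀ (μ ν : List ℕ), μ.Pairwise (· ≥ ·) → ν.Pairwise (· ≥ ·) →
    (∀ p ∈ μ, 0 < p) → (∀ p ∈ ν, 0 < p) → heightsZ μ = heightsZ ν → μ = ν
  | [], [], _, _, _, _, _ => rfl
  | [], b :: ν, _, _, _, hν, h => by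
    exfalso
    have hb := sub_one_mem_heightsZ (hν b (List.mem_cons_self)) ν
    rw [← h] at hb
    simp [heightsZ] at hb
  | a :: μ, [], _, _, hμ, _, h => by
    exfalso
    have hb := sub_one_mem_heightsZ (hμ a (List.mem_cons_self)) μ
    rw [h] at hb
    simp [heightsZ] at hb
  | a :: μ, b :: ν, hμs, hνs, hμp, hνp, h => by
    have hab : a = b := by
      have h1 : (a : ℤ) - 1 ≤ (b : ℤ) - 1 :=
        heightsZ_le_of_sorted hνs (h ▸ sub_one_mem_heightsZ (hμp a (List.mem_cons_self)) μ)
      have h2 : (b : ℤ) - 1 ≤ (a : ℤ) - 1 :=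
        heightsZ_le_of_sorted hμs (h.symm ▸ sub_one_mem_heightsZ (hνp b (List.mem_cons_self)) ν)
      omega
    subst hab
    rw [heightsZ_cons, heightsZ_cons] at h
    have h' := add_left_cancel h
    have h'' := Multiset.map_injective (f := fun h : ℤ => h - 1) sub_left_injective h'
    rw [heightsZ_injective μ ν hμs.of_cons hνs.of_cons
      (fun p hp => hμp p (List.mem_cons_of_mem _ hp))
      (fun p hp => hνp p (List.mem_cons_of_mem _ hp)) h'']

lemma multiset_map_injOn {α β : Type*} [DecidableEq α] {f : α → β} {S : Set α} (hf : Set.InjOn f S) :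
    ∀ (s t : Multiset α), (∀ a ∈ s, a ∈ S) → (∀ a ∈ t, a ∈ S) →
      s.map f = t.map f → s = t := by
  intro s
  induction s using Multiset.induction_on with
  | empty =>
    intro t _ _ h
    simpa using (Multiset.map_eq_zero.mp h.symm).symm
  | cons a s ih =>
    intro t hs ht h
    have ha : f a ∈ t.map f := by rw [← h]; simp
    obtain ⟨b, hb, hfb⟩ := Multiset.mem_map.mp ha
    have hba : b = a := hf (ht b hb) (hs a (Multiset.mem_cons_self _ _)) hfb
    subst hba
    have ht' : t = b ::ₘ t.erase b := (Multiset.cons_erase hb).symm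
    rw [ht'] at h ⊢
    rw [Multiset.map_cons, Multiset.map_cons, Multiset.cons_inj_right] at h
    rw [Multiset.cons_inj_right]
    exact ih _ (fun c hc => hs c (Multiset.mem_cons_of_mem hc))
      (fun c hc => ht c (Multiset.mem_of_mem_erase hc)) h

lemma abs_inj_of_generic {n : ℕ} {k₁ k₂ : ℝ} (hgen : BnGeneric n k₁ k₂)
    {h h' : ℤ} (hb : |h| ≤ (n : ℤ) - 1) (hb' : |h'| ≤ (n : ℤ) - 1)
    (heq : |(h : ℝ) * k₁ + k₂| = |(h' : ℝ) * k₁ + k₂|) : h = h' := by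
  obtain ⟨hk₁k₂, hprod⟩ := mul_ne_zero_iff.mp hgen
  obtain ⟨hk₁, hk₂⟩ := mul_ne_zero_iff.mp hk₁k₂
  have hfac := Finset.prod_ne_zero_iff.mp hprod
  rw [abs_le] at hb hb'
  have hn : 1 ≤ n := by
    by_contra hc
    interval_cases n <;> omega
  rw [abs_eq_abs] at heq
  rcases heq with heq | heq
  · have h1 : (h : ℝ) * k₁ = (h' : ℝ) * k₁ := by linarith
    have := mul_right_cancel₀ hk₁ h1
    exact_mod_cast this
  · exfalso
    have hsum : ((h + h' : ℤ) : ℝ) * k₁ + 2 * k₂ = 0 := by push_cast; linarith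
    set m : ℤ := h + h' with hm
    have hmb : -(2 * ((n : ℤ) - 1)) ≤ m ∧ m ≤ 2 * ((n : ℤ) - 1) := by omega
    rcases lt_trichotomy m 0 with hlt | hzero | hgt
    · have hj : (-m).toNat ∈ Finset.Icc 1 (2 * (n - 1)) := by
        rw [Finset.mem_Icc]
        omega
      have := mul_ne_zero_iff.mp (hfac _ hj) |>.2
      apply this
      have : (((-m).toNat : ℤ) : ℝ) = -(m : ℝ) := by push_cast [Int.toNat_of_nonneg (by omega : (0:ℤ) ≤ -m)]; ring
      rw [show (((-m).toNat : ℕ) : ℝ) = (((-m).toNat : ℤ) : ℝ) by push_cast; ring, this]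
      linarith
    · rw [hzero] at hsum
      simp at hsum
      exact hk₂ (by linarith)
    · have hj : m.toNat ∈ Finset.Icc 1 (2 * (n - 1)) := by
        rw [Finset.mem_Icc]
        omega
      have := mul_ne_zero_iff.mp (hfac _ hj) |>.1
      apply this
      have : ((m.toNat : ℤ) : ℝ) = (m : ℝ) := by push_cast [Int.toNat_of_nonneg (by omega : (0:ℤ) ≤ m)]; ring
      rw [show ((m.toNat : ℕ) : ℝ) = ((m.toNat : ℤ) : ℝ) by push_cast; ring, this]
      linarith

lemma ofFn_comp_perm {n : ℕ} (g : Fin n → ℝ) (σ : Equiv.Perm (Fin n)) :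
    (↑(List.ofFn fun i => g (σ i)) : Multiset ℝ) = ↑(List.ofFn g) := by
  rw [List.ofFn_eq_map, List.ofFn_eq_map, ← Multiset.map_coe, ← Multiset.map_coe]
  have huniv : (↑(List.finRange n) : Multiset (Fin n)) = (Finset.univ : Finset (Fin n)).val := by
    rw [Fin.univ_def]
  rw [huniv]
  have : (fun i => g (σ i)) = g ∘ σ := rfl
  rw [this, ← Multiset.map_map, Multiset.map_univ_val_equiv]

theorem stmt_15 (n : ℕ) (hn : 1 ≤ n) (k₁ k₂ : ℝ) (hgen : BnGeneric n k₁ k₂)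
    (μ ν : List ℕ) (hμ : IsPartitionOf n μ) (hν : IsPartitionOf n ν) (hμν : μ ≠ ν)
    (x y : Fin n → ℝ) (hx : IsLambdaVec n k₁ k₂ μ x) (hy : IsLambdaVec n k₁ k₂ ν y) :
    ¬ ∃ (σ : Equiv.Perm (Fin n)) (ε : Fin n → ℝ),
        (∀ i, ε i = 1 ∨ ε i = -1) ∧ (∀ i, y i = ε i * x (σ i)) := by
  rintro ⟨σ, ε, hε, hyx⟩
  apply hμν
  have habs : (heightCoords k₁ k₂ ν).map abs = (heightCoords k₁ k₂ μ).map abs := by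
    rw [← hx, ← hy]
    calc (↑(List.ofFn y) : Multiset ℝ).map abs
        = ↑(List.ofFn fun i => |y i|) := by
          rw [Multiset.map_coe, List.map_ofFn]; rfl
      _ = ↑(List.ofFn fun i => |x (σ i)|) := by
          refine congrArg _ (congrArg List.ofFn (funext fun i => ?_))
          rcases hε i with h | h <;> simp [hyx i, h, abs_mul]
      _ = ↑(List.ofFn fun i => |x i|) := ofFn_comp_perm (fun i => |x i|) σ
      _ = (↑(List.ofFn x) : Multiset ℝ).map abs := by
          rw [Multiset.map_coe, List.map_ofFn]; rfl
  rw [heightCoords_eq_map, heightCoords_eq_map, Multiset.map_map, Multiset.map_map] at habs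
  have hZ : heightsZ ν = heightsZ μ := by
    refine multiset_map_injOn (S := {h : ℤ | |h| ≤ (n : ℤ) - 1})
      (fun a ha b hb e => abs_inj_of_generic hgen ha hb e) _ _
      (fun a ha => heightsZ_bound hν ha) (fun a ha => heightsZ_bound hμ ha) habs
  exact heightsZ_injective μ ν hμ.1 hν.1 hμ.2.1 hν.2.1 hZ.symm
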